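/- Let q_k > 1 be the unique real root of q^{k+1} − q^k − 1 = 0. Then for every real Q > 0 there exists a sequence of integers b_k such that q_k^{b_k} → Q as k → ∞. -/

import Mathlib

open Filter Real

/-- Let `q_k > 1` be the unique real root of `q^{k+1} - q^k - 1 = 0`. For every real `Q > 0`
there is a sequence of integers `b_k` with `q_k^{b_k} → Q` as `k → ∞`. -/
theorem stmt14 (Qk : ℕ → ℝ)
    (hQk : ∀ k : ℕ, 1 ≤ k → 1 < Qk k ∧ Qk k ^ (k + 1) - Qk k ^ k - 1 = 0)
    (Q : ℝ) (hQ : 0 < Q) :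
    ∃ b : ℕ → ℤ, Filter.Tendsto (fun k => Qk k ^ b k) Filter.atTop (nhds Q) := by
  -- key identity: Qk^k * (Qk - 1) = 1
  have key : ∀ k : ℕ, 1 ≤ k → Qk k ^ k * (Qk k - 1) = 1 := by
    intro k hk
    have h := (hQk k hk).2
    have hs : Qk k ^ (k + 1) = Qk k ^ k * Qk k := pow_succ _ _
    nlinarith [h, hs]
  -- bound Qk k ≤ 1 + sqrt (1/k)
  have hub : ∀ k : ℕ, 1 ≤ k → Qk k ≤ 1 + Real.sqrt (1 / k) := by
    intro k hk
    have h1 := (hQk k hk).1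
    have ha : (0:ℝ) ≤ Qk k - 1 := by linarith
    have hbern : 1 + (k:ℝ) * (Qk k - 1) ≤ (1 + (Qk k - 1)) ^ k :=
      one_add_mul_le_pow (by linarith) k
    have hpow : (1 + (Qk k - 1)) ^ k = Qk k ^ k := by ring_nf
    have hkey := key k hk
    have hk0 : (0:ℝ) < k := by exact_mod_cast hk
    have hsq : (Qk k - 1) ^ 2 ≤ 1 / k := by
      rw [le_div_iff₀ hk0]
      nlinarith [hbern, hpow, hkey, ha]
    have : Qk k - 1 ≤ Real.sqrt (1 / k) := by
      have := Real.sqrt_le_sqrt hsq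
      rwa [Real.sqrt_sq ha] at this
    linarith
  -- Qk → 1
  have hlim : Tendsto Qk atTop (nhds 1) := by
    have hup : Tendsto (fun k : ℕ => 1 + Real.sqrt (1 / k)) atTop (nhds 1) := by
      have h0 : Tendsto (fun k : ℕ => (1:ℝ) / k) atTop (nhds 0) :=
        tendsto_one_div_atTop_nhds_zero_nat
      have := (Real.continuous_sqrt.tendsto 0).comp h0
      rw [Real.sqrt_zero] at this
      simpa using (tendsto_const_nhds (x := (1:ℝ))).add this
    refine tendsto_of_tendsto_of_tendsto_of_le_of_le' tendsto_const_nhds hup ?_ ?_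
    · filter_upwards [eventually_ge_atTop 1] with k hk
      exact le_of_lt (hQk k hk).1
    · filter_upwards [eventually_ge_atTop 1] with k hk
      exact hub k hk
  -- log Qk → 0
  have hlog : Tendsto (fun k => Real.log (Qk k)) atTop (nhds 0) := by
    have := (Real.continuousAt_log (by norm_num : (1:ℝ) ≠ 0)).tendsto.comp hlim
    simpa [Function.comp_def] using this
  -- choose b
  refine ⟨fun k => ⌊Real.log Q / Real.log (Qk k)⌋, ?_⟩
  have hmain : Tendsto (fun k => (⌊Real.log Q / Real.log (Qk k)⌋ : ℝ) * Real.log (Qk k))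
      atTop (nhds (Real.log Q)) := by
    have hlow : Tendsto (fun k => Real.log Q - Real.log (Qk k)) atTop (nhds (Real.log Q)) := by
      simpa using (tendsto_const_nhds (x := Real.log Q)).sub hlog
    refine tendsto_of_tendsto_of_tendsto_of_le_of_le' hlow tendsto_const_nhds ?_ ?_
    · filter_upwards [eventually_ge_atTop 1] with k hk
      have hL : 0 < Real.log (Qk k) := Real.log_pos (hQk k hk).1
      have h1 : Real.log Q / Real.log (Qk k) < ⌊Real.log Q / Real.log (Qk k)⌋ + 1 :=
        Int.lt_floor_add_one _
      have := (div_lt_iff₀ hL).mp h1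
      linarith
    · filter_upwards [eventually_ge_atTop 1] with k hk
      have hL : 0 < Real.log (Qk k) := Real.log_pos (hQk k hk).1
      have h1 : (⌊Real.log Q / Real.log (Qk k)⌋ : ℝ) ≤ Real.log Q / Real.log (Qk k) :=
        Int.floor_le _
      exact (le_div_iff₀ hL).mp h1
  have hexp : Tendsto (fun k => Real.exp ((⌊Real.log Q / Real.log (Qk k)⌋ : ℝ) *
      Real.log (Qk k))) atTop (nhds Q) := by
    have := (Real.continuous_exp.tendsto _).comp hmain
    rwa [Real.exp_log hQ] at this
  refine hexp.congr' ?_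
  filter_upwards [eventually_ge_atTop 1] with k hk
  have hpos : 0 < Qk k := lt_trans one_pos (hQk k hk).1
  rw [← Real.rpow_intCast (Qk k) _, Real.rpow_def_of_pos hpos, mul_comm]
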